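/- Let A ∈ ℝ^{n×n} be symmetric and let L, B, M, D be positive diagonal matrices (all diagonal entries strictly positive). Then all eigenvalues of LBA − MD are real, and the largest eigenvalue of LBA − MD is at most 0 if and only if the symmetric matrix A − (LB)^{-1}MD is negative semidefinite. -/

import Mathlib

open Matrix Finset

lemma aux_complex {n : ℕ} (A : Matrix (Fin n) (Fin n) ℝ) (hA : A.IsSymm)
    (p q : Fin n → ℝ) (hp : ∀ i, 0 < p i)
    (μ : ℂ) (v : Fin n → ℂ) (hv : v ≠ 0)
    (heq : ((diagonal p * A - diagonal q).map (Complex.ofReal)) *ᵥ v = μ • v) :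
    μ.im = 0 := by
  classical
  have hcomp : ∀ i, (∑ j, (A i j : ℂ) * v j)
      = (μ * ((p i)⁻¹ : ℝ)) * v i + (((p i)⁻¹ * q i : ℝ) : ℂ) * v i := by
    intro i
    have h1 := congrFun heq i
    simp only [Pi.smul_apply, smul_eq_mul] at h1
    have h1' : ∑ j, ((p i * A i j - (if i = j then q i else 0) : ℝ) : ℂ) * v j = μ * v i := by
      rw [← h1]
      simp only [Matrix.mulVec, dotProduct, Matrix.map_apply]
      refine Finset.sum_congr rfl fun j _ => ?_
      congr 2
      simp [Matrix.sub_apply, Matrix.diagonal_mul, Matrix.diagonal_apply]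
    have h2 : (p i : ℂ) * (∑ j, (A i j : ℂ) * v j) - (q i : ℂ) * v i = μ * v i := by
      rw [← h1']
      have hterm : ∀ j, ((p i * A i j - if i = j then q i else 0 : ℝ) : ℂ) * v j
          = (p i : ℂ) * ((A i j : ℂ) * v j) - (if i = j then (q i : ℂ) else 0) * v j := by
        intro j; split_ifs with h <;> push_cast <;> ring
      simp only [hterm, Finset.sum_sub_distrib]
      rw [Finset.mul_sum]
      congr 1
      simp [ite_mul]
    have hpne : (p i : ℂ) ≠ 0 := Complex.ofReal_ne_zero.mpr (hp i).ne'
    push_cast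
    field_simp
    linear_combination h2
  set E : ℂ := ∑ i, ∑ j, (A i j : ℂ) * (starRingEnd ℂ) (v i) * v j with hE_def
  have hE_real : (starRingEnd ℂ) E = E := by
    rw [hE_def]
    calc (starRingEnd ℂ) (∑ i, ∑ j, (A i j : ℂ) * (starRingEnd ℂ) (v i) * v j)
        = ∑ i, ∑ j, (starRingEnd ℂ) ((A i j : ℂ) * (starRingEnd ℂ) (v i) * v j) := by
          rw [_root_.map_sum]
          exact Finset.sum_congr rfl fun i _ => _root_.map_sum _ _ _
      _ = ∑ j, ∑ i, (starRingEnd ℂ) ((A i j : ℂ) * (starRingEnd ℂ) (v i) * v j) :=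
          Finset.sum_comm
      _ = ∑ x, ∑ y, (A x y : ℂ) * (starRingEnd ℂ) (v x) * v y := by
          refine Finset.sum_congr rfl fun x _ => Finset.sum_congr rfl fun y _ => ?_
          simp only [_root_.map_mul, Complex.conj_ofReal, Complex.conj_conj]
          rw [hA.apply x y]
          ring
  have key : ∀ i, ∑ j, (A i j : ℂ) * (starRingEnd ℂ) (v i) * v j
      = (μ * ((p i)⁻¹ : ℝ) + (((p i)⁻¹ * q i : ℝ) : ℂ)) * (Complex.normSq (v i) : ℂ) := by
    intro i
    have hsplit : ∑ j, (A i j : ℂ) * (starRingEnd ℂ) (v i) * v j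
        = (starRingEnd ℂ) (v i) * ∑ j, (A i j : ℂ) * v j := by
      rw [Finset.mul_sum]
      exact Finset.sum_congr rfl fun j _ => by ring
    rw [hsplit, hcomp i]
    have hns : (starRingEnd ℂ) (v i) * v i = (Complex.normSq (v i) : ℂ) := by
      rw [mul_comm, Complex.mul_conj]
    linear_combination (μ * ((p i)⁻¹ : ℝ) + (((p i)⁻¹ * q i : ℝ) : ℂ)) * hns
  set N : ℝ := ∑ i, (p i)⁻¹ * Complex.normSq (v i) with hN_def
  have hEim : E.im = 0 := Complex.conj_eq_iff_im.mp hE_real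
  have hEim2 : E.im = μ.im * N := by
    rw [hE_def]
    rw [Complex.im_sum]
    rw [hN_def, Finset.mul_sum]
    refine Finset.sum_congr rfl fun i _ => ?_
    rw [key i]
    simp [Complex.add_im, Complex.mul_im, Complex.mul_re]
    ring
  have hN_pos : 0 < N := by
    obtain ⟨i0, hi0⟩ : ∃ i, v i ≠ 0 := by
      by_contra h; push_neg at h; exact hv (funext h)
    refine Finset.sum_pos' (fun i _ => mul_nonneg (inv_nonneg.mpr (hp i).le)
      (Complex.normSq_nonneg _)) ⟨i0, Finset.mem_univ i0,
        mul_pos (inv_pos.mpr (hp i0)) (Complex.normSq_pos.mpr hi0)⟩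
  have := hEim2.symm.trans hEim
  rcases mul_eq_zero.mp this with h | h
  · exact h
  · exact absurd h hN_pos.ne'

theorem stmt_1 {n : ℕ} (A : Matrix (Fin n) (Fin n) ℝ) (hA : A.IsSymm)
    (l b m d : Fin n → ℝ)
    (hl : ∀ i, 0 < l i) (hb : ∀ i, 0 < b i) (hm : ∀ i, 0 < m i) (hd : ∀ i, 0 < d i) :
    (∀ μ : ℂ, (∃ v : Fin n → ℂ, v ≠ 0 ∧
        ((diagonal l * diagonal b * A - diagonal m * diagonal d).map
          (Complex.ofReal)) *ᵥ v = μ • v) → μ.im = 0) ∧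
    ((∀ μ : ℝ, (∃ v : Fin n → ℝ, v ≠ 0 ∧
        (diagonal l * diagonal b * A - diagonal m * diagonal d) *ᵥ v = μ • v) → μ ≤ 0) ↔
      (∀ x : Fin n → ℝ,
        x ⬝ᵥ ((A - (diagonal l * diagonal b)⁻¹ * (diagonal m * diagonal d)) *ᵥ x) ≤ 0)) := by
  classical
  have hLB : diagonal l * diagonal b = diagonal (fun i => l i * b i) :=
    diagonal_mul_diagonal _ _
  have hMD : diagonal m * diagonal d = diagonal (fun i => m i * d i) :=
    diagonal_mul_diagonal _ _
  set p : Fin n → ℝ := fun i => l i * b i with hp_def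
  set q : Fin n → ℝ := fun i => m i * d i with hq_def
  have hp : ∀ i, 0 < p i := fun i => mul_pos (hl i) (hb i)
  have hq : ∀ i, 0 < q i := fun i => mul_pos (hm i) (hd i)
  rw [hLB, hMD]
  set S : Matrix (Fin n) (Fin n) ℝ := A - diagonal (fun i => (p i)⁻¹ * q i) with hS_def
  have hinv : (diagonal p)⁻¹ = diagonal (fun i => (p i)⁻¹) := by
    refine Matrix.inv_eq_left_inv ?_
    rw [diagonal_mul_diagonal,
      show (fun i => (p i)⁻¹ * p i) = fun _ => (1 : ℝ) from
        funext fun i => inv_mul_cancel₀ (hp i).ne', diagonal_one]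
  have hSgoal : A - (diagonal p)⁻¹ * diagonal q = S := by
    rw [hinv, diagonal_mul_diagonal, hS_def]
  have hX : diagonal p * A - diagonal q = diagonal p * S := by
    rw [hS_def, Matrix.mul_sub, diagonal_mul_diagonal]
    congr 1
    exact congrArg diagonal (funext fun i => by
      rw [← mul_assoc, mul_inv_cancel₀ (hp i).ne', one_mul])
  constructor
  · rintro μ ⟨v, hv, heq⟩
    exact aux_complex A hA p q hp μ v hv heq
  · rw [hSgoal]
    set s : Fin n → ℝ := fun i => Real.sqrt (p i) with hs_def
    have hs : ∀ i, 0 < s i := fun i => Real.sqrt_pos.mpr (hp i)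
    have hss : ∀ i, s i * s i = p i := fun i => Real.mul_self_sqrt (hp i).le
    set T : Matrix (Fin n) (Fin n) ℝ := diagonal s * S * diagonal s with hT_def
    have hSsymm : Sᵀ = S := by
      rw [hS_def, transpose_sub, diagonal_transpose, hA]
    have hps : diagonal p = diagonal s * diagonal s := by
      rw [diagonal_mul_diagonal]
      exact congrArg diagonal (funext fun i => (hss i).symm)
    have hXT : (diagonal p * S) * diagonal s = diagonal s * T := by
      rw [hps, hT_def]
      simp only [Matrix.mul_assoc]
    have hTherm : T.IsHermitian := by
      have hTt : Tᵀ = T := by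
        rw [hT_def, transpose_mul, transpose_mul, diagonal_transpose, hSsymm,
          Matrix.mul_assoc]
      show Tᴴ = T
      rw [conjTranspose_eq_transpose_of_trivial, hTt]
    constructor
    · intro h x
      have hTnegherm : (-T).IsHermitian := hTherm.neg
      have hTnegpsd : (-T).PosSemidef := by
        refine hTnegherm.posSemidef_iff_eigenvalues_nonneg.mpr fun i => (?_ : (0 : ℝ) ≤ _)
        set ν : ℝ := hTnegherm.eigenvalues i with hν
        have hw := hTnegherm.mulVec_eigenvectorBasis i
        set w : Fin n → ℝ := ⇑(hTnegherm.eigenvectorBasis i) with hw_def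
        have hw0 : w ≠ 0 := by
          have hne := hTnegherm.eigenvectorBasis.orthonormal.ne_zero i
          intro hc
          apply hne
          ext k
          exact congrFun hc k
        have hTw : T *ᵥ w = (-ν) • w := by
          rw [Matrix.neg_mulVec] at hw
          rw [neg_smul]
          exact neg_eq_iff_eq_neg.mp hw
        set v : Fin n → ℝ := fun k => s k * w k with hv_def
        have hv_eq : v = diagonal s *ᵥ w := by
          funext k
          simp [hv_def, Matrix.mulVec_diagonal]
        have hv0 : v ≠ 0 := by
          intro hc
          apply hw0
          funext k
          have := congrFun hc k
          simp only [hv_def, Pi.zero_apply] at this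
          have : w k = 0 := by
            rcases mul_eq_zero.mp this with h' | h'
            · exact absurd h' (hs k).ne'
            · exact h'
          simpa using this
        have heig : (diagonal p * A - diagonal q) *ᵥ v = (-ν) • v := by
          rw [hX, hv_eq, Matrix.mulVec_mulVec, hXT, ← Matrix.mulVec_mulVec, hTw,
            Matrix.mulVec_smul]
        have := h (-ν) ⟨v, hv0, heig⟩
        linarith
      set y : Fin n → ℝ := fun i => (s i)⁻¹ * x i with hy_def
      have hx_eq : diagonal s *ᵥ y = x := by
        funext k
        simp only [Matrix.mulVec_diagonal, hy_def]
        exact mul_inv_cancel_left₀ (hs k).ne' (x k)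
      have h1 : T *ᵥ y = diagonal s *ᵥ (S *ᵥ x) := by
        rw [hT_def, ← Matrix.mulVec_mulVec, ← Matrix.mulVec_mulVec, hx_eq]
      have h2 : y ⬝ᵥ (T *ᵥ y) = x ⬝ᵥ (S *ᵥ x) := by
        rw [h1]
        simp only [dotProduct, Matrix.mulVec_diagonal, hy_def]
        refine Finset.sum_congr rfl fun i _ => ?_
        have := (hs i).ne'
        field_simp
      have h3 := hTnegpsd.dotProduct_mulVec_nonneg y
      simp only [star_trivial, Matrix.neg_mulVec, dotProduct_neg] at h3
      linarith [h2]
    · rintro h μ ⟨v, hv, heq⟩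
      rw [hX, ← Matrix.mulVec_mulVec] at heq
      have hSv : S *ᵥ v = fun i => μ * ((p i)⁻¹ * v i) := by
        funext i
        have h1 := congrFun heq i
        simp only [Matrix.mulVec_diagonal, Pi.smul_apply, smul_eq_mul] at h1
        have hpne := (hp i).ne'
        field_simp
        linarith [h1]
      have hle := h v
      rw [hSv] at hle
      have hsum : v ⬝ᵥ (fun i => μ * ((p i)⁻¹ * v i)) = μ * ∑ i, (p i)⁻¹ * (v i * v i) := by
        simp only [dotProduct, Finset.mul_sum]
        exact Finset.sum_congr rfl fun i _ => by ring
      rw [hsum] at hle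
      have hpos : 0 < ∑ i, (p i)⁻¹ * (v i * v i) := by
        obtain ⟨i0, hi0⟩ : ∃ i, v i ≠ 0 := by
          by_contra hc; push_neg at hc; exact hv (funext hc)
        exact Finset.sum_pos' (fun i _ => mul_nonneg (inv_nonneg.mpr (hp i).le)
          (mul_self_nonneg _)) ⟨i0, Finset.mem_univ i0,
            mul_pos (inv_pos.mpr (hp i0)) (mul_self_pos.mpr hi0)⟩
      by_contra hc
      push_neg at hc
      nlinarith
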